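/- One-loop loop-tree duality for a massive bubble at the level of energy integration: for real ω₁, ω₂ > 0, real q₀, and δ → 0⁺ understood via distinct lower-half-plane poles, ∫_ℝ dE / [(E² − ω₁² + iδ)((E+q₀)² − ω₂² + iδ)] = −πi·[ 1/(ω₁((ω₁+q₀)² − ω₂² + iδ')) + 1/(ω₂((ω₂−q₀)² − ω₁² + iδ'')) ] + o(1) as δ → 0⁺, where the signs of the infinitesimal imaginary parts δ', δ'' > 0 are both positive (dual prescription), assuming (ω₁+q₀)² ≠ ω₂² and (ω₂−q₀)² ≠ ω₁² so the limit is finite and the o(1) vanishes. -/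

import Mathlib

open Real Filter MeasureTheory

lemma my_sub_ne (z : ℂ) (hz : z.im ≠ 0) (x : ℝ) : (x : ℂ) - z ≠ 0 := by
  intro h
  apply hz
  have := congrArg Complex.im h
  simpa using this

lemma my_bound (p q x : ℝ) :
    q ^ 2 / (1 + 2 * p ^ 2 + 2 * q ^ 2) * (1 + x ^ 2) ≤ (x - p) ^ 2 + q ^ 2 := by
  rw [div_mul_eq_mul_div, div_le_iff₀ (by positivity)]
  nlinarith [sq_nonneg (x - 2 * p), sq_nonneg (x - p), sq_nonneg (q * (x - 2 * p)),
    sq_nonneg (q * (x - p)), sq_nonneg q, sq_nonneg p, sq_nonneg x]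

lemma my_abs_lb (z : ℂ) (hz : z.im ≠ 0) (x : ℝ) :
    Real.sqrt (z.im ^ 2 / (1 + 2 * z.re ^ 2 + 2 * z.im ^ 2)) * Real.sqrt (1 + x ^ 2)
      ≤ ‖(x : ℂ) - z‖ := by
  rw [← Real.sqrt_mul (by positivity), ← Real.sqrt_sq (norm_nonneg _)]
  apply Real.sqrt_le_sqrt
  rw [Complex.sq_norm, Complex.normSq_apply]
  have := my_bound z.re z.im x
  simp only [Complex.sub_re, Complex.ofReal_re, Complex.sub_im, Complex.ofReal_im]
  nlinarith [this]

lemma my_integrable (z w : ℂ) (hz : z.im ≠ 0) (hw : w.im ≠ 0) :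
    Integrable fun x : ℝ => (((x : ℂ) - z) * ((x : ℂ) - w))⁻¹ := by
  set cz := Real.sqrt (z.im ^ 2 / (1 + 2 * z.re ^ 2 + 2 * z.im ^ 2)) with hcz
  set cw := Real.sqrt (w.im ^ 2 / (1 + 2 * w.re ^ 2 + 2 * w.im ^ 2)) with hcw
  have hcz0 : 0 < cz := Real.sqrt_pos.mpr (by positivity)
  have hcw0 : 0 < cw := Real.sqrt_pos.mpr (by positivity)
  have hcont : Continuous fun x : ℝ => (((x : ℂ) - z) * ((x : ℂ) - w))⁻¹ := by
    apply Continuous.inv₀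
    · continuity
    · intro x
      exact mul_ne_zero (my_sub_ne z hz x) (my_sub_ne w hw x)
  apply Integrable.mono' ((integrable_inv_one_add_sq).const_mul ((cz * cw)⁻¹))
    hcont.aestronglyMeasurable
  filter_upwards with x
  have h1 : cz * Real.sqrt (1 + x ^ 2) ≤ ‖(x : ℂ) - z‖ := my_abs_lb z hz x
  have h2 : cw * Real.sqrt (1 + x ^ 2) ≤ ‖(x : ℂ) - w‖ := my_abs_lb w hw x
  have hx : (0:ℝ) < 1 + x ^ 2 := by positivity
  have hsq : Real.sqrt (1 + x ^ 2) * Real.sqrt (1 + x ^ 2) = 1 + x ^ 2 :=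
    Real.mul_self_sqrt hx.le
  have hprod : cz * cw * (1 + x ^ 2) ≤ ‖(x : ℂ) - z‖ * ‖(x : ℂ) - w‖ := by
    calc cz * cw * (1 + x ^ 2)
        = cz * cw * (Real.sqrt (1 + x ^ 2) * Real.sqrt (1 + x ^ 2)) := by rw [hsq]
      _ = (cz * Real.sqrt (1 + x ^ 2)) * (cw * Real.sqrt (1 + x ^ 2)) := by ring
      _ ≤ _ := mul_le_mul h1 h2 (by positivity) (norm_nonneg _)
  rw [norm_inv]
  have : ‖((x : ℂ) - z) * ((x : ℂ) - w)‖ = ‖(x : ℂ) - z‖ * ‖(x : ℂ) - w‖ := by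
    simp  -- norm = abs; map_mul
  rw [this, ← mul_inv]
  exact inv_anti₀ (by positivity) hprod

lemma my_inv_c_top : Tendsto (fun x : ℝ => ((x : ℂ))⁻¹) atTop (nhds 0) := by
  have := (Complex.continuous_ofReal.tendsto 0).comp (tendsto_inv_atTop_zero (𝕜 := ℝ))
  simpa [Function.comp_def, Complex.ofReal_inv] using this

lemma my_inv_c_bot : Tendsto (fun x : ℝ => ((x : ℂ))⁻¹) atBot (nhds 0) := by
  have h : Tendsto (fun x : ℝ => -x) atBot atTop := tendsto_neg_atBot_atTop
  have := my_inv_c_top.comp h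
  have h2 : Tendsto (fun x : ℝ => -((-x : ℝ) : ℂ)⁻¹) atBot (nhds 0) := by
    simpa using this.neg
  apply h2.congr
  intro x
  push_cast
  simp [inv_neg]

lemma my_hasDerivAt_log (z : ℂ) (hz : z.im ≠ 0) (x : ℝ) :
    HasDerivAt (fun y : ℝ => Complex.log ((y : ℂ) - z)) (((x : ℂ) - z)⁻¹) x := by
  have hmem : (x : ℂ) - z ∈ Complex.slitPlane := by
    rw [Complex.mem_slitPlane_iff]
    right
    simpa using fun h => hz (by linarith [h])
  have h1 : HasDerivAt (fun y : ℂ => Complex.log (y - z)) (((x : ℂ) - z)⁻¹) (x : ℂ) := by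
    simpa [Function.comp_def] using (Complex.hasDerivAt_log hmem).comp (x : ℂ)
      ((hasDerivAt_id ((x : ℂ))).sub_const z)
  exact h1.comp_ofReal

lemma my_tendsto_top (z w : ℂ) (hz : z.im ≠ 0) (hw : w.im ≠ 0) :
    Tendsto (fun x : ℝ => Complex.log ((x : ℂ) - z) - Complex.log ((x : ℂ) - w)) atTop
      (nhds 0) := by
  have key : ∀ u : ℂ, u.im ≠ 0 → Tendsto
      (fun x : ℝ => Complex.log ((x : ℂ) - u) - (Real.log x : ℂ)) atTop
      (nhds 0) := by
    intro u hu
    have h0 : Tendsto (fun x : ℝ => 1 - u * ((x : ℂ))⁻¹) atTop (nhds 1) := by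
      simpa using (tendsto_const_nhds (x := (1:ℂ))).sub (my_inv_c_top.const_mul u)
    have hlog : Tendsto (fun x : ℝ => Complex.log (1 - u * ((x : ℂ))⁻¹)) atTop (nhds 0) := by
      have hc : ContinuousAt Complex.log 1 := continuousAt_clog (by simp)
      simpa [Complex.log_one, Function.comp_def] using hc.tendsto.comp h0
    apply hlog.congr'
    filter_upwards [eventually_gt_atTop (0:ℝ)] with x hx
    have hx0 : ((x : ℝ) : ℂ) ≠ 0 := Complex.ofReal_ne_zero.mpr hx.ne'
    have hne : (1 : ℂ) - u * ((x : ℂ))⁻¹ ≠ 0 := by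
      intro h
      have him := congrArg Complex.im h
      simp [Complex.sub_im, Complex.mul_im] at him
      rcases him with h | h
      · exact hu h
      · exact hx.ne' h
    have hmul : ((x : ℝ) : ℂ) * (1 - u * ((x : ℂ))⁻¹) = (x : ℂ) - u := by
      field_simp
    rw [← hmul, Complex.log_ofReal_mul hx hne]
    ring
  have := (key z hz).sub (key w hw)
  simpa using this

lemma my_tendsto_bot (z : ℂ) (hz : z.im ≠ 0) :
    Tendsto (fun x : ℝ => Complex.log ((x : ℂ) - z) - (Real.log (-x) : ℂ)) atBot
      (nhds (-(Real.sign z.im) * (Real.pi * Complex.I))) := by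
  have hsel : ∀ x : ℝ, x < 0 → ((-x : ℝ) : ℂ) * ((-1 : ℂ) + z * ((x : ℂ))⁻¹) = (x : ℂ) - z := by
    intro x hx
    have hx0 : ((x : ℝ) : ℂ) ≠ 0 := Complex.ofReal_ne_zero.mpr hx.ne
    push_cast
    field_simp
    ring
  have hne : ∀ x : ℝ, x < 0 → (-1 : ℂ) + z * ((x : ℂ))⁻¹ ≠ 0 := by
    intro x hx h
    have him := congrArg Complex.im h
    simp [Complex.add_im, Complex.mul_im] at him
    rcases him with h | h
    · exact hz h
    · exact hx.ne h
  have hbase : Tendsto (fun x : ℝ => (-1 : ℂ) + z * ((x : ℂ))⁻¹) atBot (nhds (-1)) := by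
    simpa using (tendsto_const_nhds (x := (-1:ℂ))).add (my_inv_c_bot.const_mul z)
  rcases lt_or_gt_of_ne hz with hneg | hpos
  · -- z.im < 0 : points have im > 0, limit +πI
    rw [Real.sign_of_neg hneg]
    have h0 : Tendsto (fun x : ℝ => (-1 : ℂ) + z * ((x : ℂ))⁻¹) atBot
        (nhdsWithin (-1) {w : ℂ | 0 ≤ w.im}) := by
      apply tendsto_nhdsWithin_of_tendsto_nhds_of_eventually_within _ hbase
      filter_upwards [eventually_lt_atBot (0:ℝ)] with x hx
      rw [← Complex.ofReal_inv]
      simp only [Complex.add_im, Complex.neg_im, Complex.one_im, neg_zero, Complex.mul_im,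
        Complex.ofReal_re, Complex.ofReal_im, mul_zero, add_zero, zero_add]
      have : 0 < z.im * x⁻¹ := mul_pos_of_neg_of_neg hneg (inv_neg''.mpr hx)
      linarith
    have hlim := (Complex.tendsto_log_nhdsWithin_im_nonneg_of_re_neg_of_im_zero
      (z := -1) (by simp) (by simp)).comp h0
    have heq : Tendsto (fun x : ℝ => Complex.log ((-1 : ℂ) + z * ((x : ℂ))⁻¹)) atBot
        (nhds (Real.pi * Complex.I)) := by
      simpa [Function.comp_def] using hlim
    have : Tendsto (fun x : ℝ => Complex.log ((x : ℂ) - z) - (Real.log (-x) : ℂ)) atBot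
        (nhds (Real.pi * Complex.I)) := by
      apply heq.congr'
      filter_upwards [eventually_lt_atBot (0:ℝ)] with x hx
      rw [← hsel x hx, Complex.log_ofReal_mul (by linarith) (hne x hx)]
      ring
    simpa using this
  · -- z.im > 0 : points have im < 0, limit -πI
    rw [Real.sign_of_pos hpos]
    have h0 : Tendsto (fun x : ℝ => (-1 : ℂ) + z * ((x : ℂ))⁻¹) atBot
        (nhdsWithin (-1) {w : ℂ | w.im < 0}) := by
      apply tendsto_nhdsWithin_of_tendsto_nhds_of_eventually_within _ hbase
      filter_upwards [eventually_lt_atBot (0:ℝ)] with x hx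
      rw [← Complex.ofReal_inv]
      simp only [Complex.add_im, Complex.neg_im, Complex.one_im, neg_zero, Complex.mul_im,
        Complex.ofReal_re, Complex.ofReal_im, mul_zero, add_zero, zero_add]
      have : z.im * x⁻¹ < 0 := mul_neg_of_pos_of_neg hpos (inv_neg''.mpr hx)
      linarith
    have hlim := (Complex.tendsto_log_nhdsWithin_im_neg_of_re_neg_of_im_zero
      (z := -1) (by simp) (by simp)).comp h0
    have heq : Tendsto (fun x : ℝ => Complex.log ((-1 : ℂ) + z * ((x : ℂ))⁻¹)) atBot
        (nhds (-(Real.pi * Complex.I))) := by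
      simpa [sub_eq_add_neg, Function.comp_def] using hlim
    have : Tendsto (fun x : ℝ => Complex.log ((x : ℂ) - z) - (Real.log (-x) : ℂ)) atBot
        (nhds (-(Real.pi * Complex.I))) := by
      apply heq.congr'
      filter_upwards [eventually_lt_atBot (0:ℝ)] with x hx
      rw [← hsel x hx, Complex.log_ofReal_mul (by linarith) (hne x hx)]
      ring
    simpa using this

lemma my_inv_shift (z : ℂ) (l : Filter ℝ) (h : Tendsto (fun x : ℝ => ‖(x : ℂ) - z‖) l atTop) :
    Tendsto (fun x : ℝ => ((x : ℂ) - z)⁻¹) l (nhds 0) := by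
  have hc : Tendsto (fun x : ℝ => (x : ℂ) - z) l (Bornology.cobounded ℂ) :=
    tendsto_norm_atTop_iff_cobounded.mp h
  exact tendsto_inv₀_cobounded.comp hc

lemma my_inv_shift_top (z : ℂ) :
    Tendsto (fun x : ℝ => ((x : ℂ) - z)⁻¹) atTop (nhds 0) := by
  apply my_inv_shift
  apply tendsto_atTop_mono' _ (Filter.Eventually.of_forall fun x => ?_)
    (tendsto_atTop_add_const_right _ (-‖z‖) tendsto_id)
  calc x + -‖z‖ ≤ ‖(x : ℂ)‖ - ‖z‖ := by
        simp only [Complex.norm_real, Real.norm_eq_abs]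
        have := le_abs_self x
        linarith
    _ ≤ ‖(x : ℂ) - z‖ := norm_sub_norm_le _ _

lemma my_inv_shift_bot (z : ℂ) :
    Tendsto (fun x : ℝ => ((x : ℂ) - z)⁻¹) atBot (nhds 0) := by
  apply my_inv_shift
  have hb : Tendsto (fun x : ℝ => -x + -‖z‖) atBot atTop := by
    apply tendsto_atTop_add_const_right
    exact tendsto_neg_atBot_atTop
  apply tendsto_atTop_mono' _ (Filter.Eventually.of_forall fun x => ?_) hb
  calc -x + -‖z‖ ≤ ‖(x : ℂ)‖ - ‖z‖ := by
        simp only [Complex.norm_real, Real.norm_eq_abs]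
        have := neg_abs_le x
        linarith
    _ ≤ ‖(x : ℂ) - z‖ := norm_sub_norm_le _ _

lemma my_integral_opp (z w : ℂ) (hz : z.im < 0) (hw : 0 < w.im) :
    ∫ x : ℝ, (((x : ℂ) - z) * ((x : ℂ) - w))⁻¹ = 2 * Real.pi * Complex.I * (w - z)⁻¹ := by
  have hzw : z ≠ w := fun h => absurd (h ▸ hz) (asymm hw).elim  -- fix below if needed
  have hzw' : z - w ≠ 0 := sub_ne_zero.mpr hzw
  have hderiv : ∀ x : ℝ, HasDerivAt
      (fun y : ℝ => (z - w)⁻¹ * (Complex.log ((y : ℂ) - z) - Complex.log ((y : ℂ) - w)))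
      ((((x : ℂ) - z) * ((x : ℂ) - w))⁻¹) x := by
    intro x
    have h := ((my_hasDerivAt_log z hz.ne x).sub (my_hasDerivAt_log w hw.ne' x)).const_mul
      ((z - w)⁻¹)
    convert h using 1
    · rfl
    · rfl
    have h1 : (x : ℂ) - z ≠ 0 := my_sub_ne z hz.ne x
    have h2 : (x : ℂ) - w ≠ 0 := my_sub_ne w hw.ne' x
    rw [inv_sub_inv h1 h2, div_eq_mul_inv, ← mul_assoc, show (z - w)⁻¹ * (((x : ℂ) - w) - ((x : ℂ) - z)) = 1 by rw [show ((x : ℂ) - w) - ((x : ℂ) - z) = z - w by ring]; exact inv_mul_cancel₀ hzw', one_mul]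
  have htop : Tendsto
      (fun x : ℝ => (z - w)⁻¹ * (Complex.log ((x : ℂ) - z) - Complex.log ((x : ℂ) - w)))
      atTop (nhds 0) := by
    simpa using (my_tendsto_top z w hz.ne hw.ne').const_mul ((z - w)⁻¹)
  have hbot : Tendsto
      (fun x : ℝ => (z - w)⁻¹ * (Complex.log ((x : ℂ) - z) - Complex.log ((x : ℂ) - w)))
      atBot (nhds ((z - w)⁻¹ * (2 * Real.pi * Complex.I))) := by
    have h := ((my_tendsto_bot z hz.ne).sub (my_tendsto_bot w hw.ne')).const_mul ((z - w)⁻¹)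
    have harg : ∀ x : ℝ,
        (Complex.log ((x : ℂ) - z) - (Real.log (-x) : ℂ)) -
          (Complex.log ((x : ℂ) - w) - (Real.log (-x) : ℂ)) =
        Complex.log ((x : ℂ) - z) - Complex.log ((x : ℂ) - w) := fun x => by ring
    rw [Real.sign_of_neg hz, Real.sign_of_pos hw] at h
    have h2 := h.congr (fun x => by rw [harg x])
    convert h2 using 2
    push_cast
    ring
  have := MeasureTheory.integral_of_hasDerivAt_of_tendsto hderiv
    (my_integrable z w hz.ne hw.ne') hbot htop
  rw [this]
  have hwz : w - z ≠ 0 := sub_ne_zero.mpr (Ne.symm hzw)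
  field_simp
  ring

lemma my_integral_same (z w : ℂ) (hz : z.im ≠ 0) (hw : w.im ≠ 0)
    (hs : Real.sign z.im = Real.sign w.im) :
    ∫ x : ℝ, (((x : ℂ) - z) * ((x : ℂ) - w))⁻¹ = 0 := by
  by_cases hzw : z = w
  · subst hzw
    have hderiv : ∀ x : ℝ, HasDerivAt (fun y : ℝ => -((y : ℂ) - z)⁻¹)
        ((((x : ℂ) - z) * ((x : ℂ) - z))⁻¹) x := by
      intro x
      have h0 : HasDerivAt (fun y : ℂ => y - z) 1 (x : ℂ) :=
        (hasDerivAt_id ((x : ℂ))).sub_const z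
      have h1 := ((h0.inv (my_sub_ne z hz x)).neg).comp_ofReal
      convert h1 using 1
      · rfl
      rw [mul_inv]
      have h2 : (x : ℂ) - z ≠ 0 := my_sub_ne z hz x
      field_simp
    have htop : Tendsto (fun x : ℝ => -((x : ℂ) - z)⁻¹) atTop (nhds 0) := by
      simpa using (my_inv_shift_top z).neg
    have hbot : Tendsto (fun x : ℝ => -((x : ℂ) - z)⁻¹) atBot (nhds 0) := by
      simpa using (my_inv_shift_bot z).neg
    have := MeasureTheory.integral_of_hasDerivAt_of_tendsto hderiv
      (my_integrable z z hz hz) hbot htop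
    simpa using this
  · have hzw' : z - w ≠ 0 := sub_ne_zero.mpr hzw
    have hderiv : ∀ x : ℝ, HasDerivAt
        (fun y : ℝ => (z - w)⁻¹ * (Complex.log ((y : ℂ) - z) - Complex.log ((y : ℂ) - w)))
        ((((x : ℂ) - z) * ((x : ℂ) - w))⁻¹) x := by
      intro x
      have h := ((my_hasDerivAt_log z hz x).sub (my_hasDerivAt_log w hw x)).const_mul ((z - w)⁻¹)
      convert h using 1
      · rfl
      · rfl
      have h1 : (x : ℂ) - z ≠ 0 := my_sub_ne z hz x
      have h2 : (x : ℂ) - w ≠ 0 := my_sub_ne w hw x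
      rw [inv_sub_inv h1 h2, div_eq_mul_inv, ← mul_assoc, show (z - w)⁻¹ * (((x : ℂ) - w) - ((x : ℂ) - z)) = 1 by rw [show ((x : ℂ) - w) - ((x : ℂ) - z) = z - w by ring]; exact inv_mul_cancel₀ hzw', one_mul]
    have htop : Tendsto
        (fun x : ℝ => (z - w)⁻¹ * (Complex.log ((x : ℂ) - z) - Complex.log ((x : ℂ) - w)))
        atTop (nhds 0) := by
      simpa using (my_tendsto_top z w hz hw).const_mul ((z - w)⁻¹)
    have hbot : Tendsto
        (fun x : ℝ => (z - w)⁻¹ * (Complex.log ((x : ℂ) - z) - Complex.log ((x : ℂ) - w)))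
        atBot (nhds 0) := by
      have h := ((my_tendsto_bot z hz).sub (my_tendsto_bot w hw)).const_mul ((z - w)⁻¹)
      have h2 : Tendsto
          (fun x : ℝ => (z - w)⁻¹ * (Complex.log ((x : ℂ) - z) - Complex.log ((x : ℂ) - w)))
          atBot (nhds ((z - w)⁻¹ * (-(Real.sign z.im) * (Real.pi * Complex.I) -
            -(Real.sign w.im) * (Real.pi * Complex.I)))) := h.congr (fun x => by ring)
      have h3 : (z - w)⁻¹ * (-(Real.sign z.im) * (Real.pi * Complex.I) -
          -(Real.sign w.im) * (Real.pi * Complex.I)) = 0 := by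
        rw [hs]
        ring
      rwa [h3] at h2
    have := MeasureTheory.integral_of_hasDerivAt_of_tendsto hderiv
      (my_integrable z w hz hw) hbot htop
    simpa using this

noncomputable def myAlpha (ω δ : ℝ) : ℝ := Real.sqrt ((ω ^ 2 + Real.sqrt (ω ^ 4 + δ ^ 2)) / 2)

noncomputable def mySqrt (ω δ : ℝ) : ℂ :=
  (myAlpha ω δ : ℂ) - Complex.I * (δ / (2 * myAlpha ω δ) : ℝ)

lemma myAlpha_pos (ω δ : ℝ) (hω : 0 < ω) : 0 < myAlpha ω δ := by
  apply Real.sqrt_pos.mpr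
  have h := Real.sqrt_nonneg (ω ^ 4 + δ ^ 2)
  positivity

lemma mySqrt_im_neg (ω δ : ℝ) (hω : 0 < ω) (hδ : 0 < δ) : (mySqrt ω δ).im < 0 := by
  have hα := myAlpha_pos ω δ hω
  simp only [mySqrt, Complex.sub_im, Complex.ofReal_im, Complex.mul_im, Complex.I_re,
    Complex.I_im, Complex.ofReal_re, Complex.ofReal_im, zero_mul, mul_zero, one_mul, zero_add,
    zero_sub]
  rw [neg_lt, neg_zero]
  positivity

lemma mySqrt_re_pos (ω δ : ℝ) (hω : 0 < ω) : 0 < (mySqrt ω δ).re := by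
  have hα := myAlpha_pos ω δ hω
  simp only [mySqrt, Complex.sub_re, Complex.ofReal_re, Complex.mul_re, Complex.I_re,
    Complex.I_im, Complex.ofReal_im, zero_mul, mul_zero, one_mul, sub_zero, zero_sub]
  simpa using hα

lemma mySqrt_sq (ω δ : ℝ) (hω : 0 < ω) (hδ : 0 < δ) :
    (mySqrt ω δ) ^ 2 = ((ω : ℂ)) ^ 2 - Complex.I * δ := by
  set R := Real.sqrt (ω ^ 4 + δ ^ 2) with hRdef
  have hR0 : 0 ≤ R := Real.sqrt_nonneg _
  have hR2 : R ^ 2 = ω ^ 4 + δ ^ 2 := Real.sq_sqrt (by positivity)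
  set α := myAlpha ω δ with hαdef
  have hα : 0 < α := myAlpha_pos ω δ hω
  have hα2 : α ^ 2 = (ω ^ 2 + R) / 2 := Real.sq_sqrt (by positivity)
  set β := δ / (2 * α) with hβdef
  have h2αβ : 2 * α * β = δ := by
    rw [hβdef]
    field_simp
  have hα2β2 : α ^ 2 - β ^ 2 = ω ^ 2 := by
    rw [hβdef]
    field_simp
    nlinarith [hα2, hR2, hα.le]
  have key : ∀ p q : ℝ, ((p : ℂ) - Complex.I * q) ^ 2
      = ((p ^ 2 - q ^ 2 : ℝ) : ℂ) - Complex.I * ((2 * p * q : ℝ) : ℂ) := by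
    intro p q
    push_cast
    linear_combination ((q : ℂ) ^ 2) * Complex.I_sq
  rw [mySqrt, key α β, hα2β2, h2αβ]
  push_cast
  ring

lemma mySqrt_tendsto (ω : ℝ) (hω : 0 < ω) :
    Tendsto (fun δ : ℝ => mySqrt ω δ) (nhdsWithin 0 (Set.Ioi 0)) (nhds (ω : ℂ)) := by
  have hαcont : ContinuousAt (fun δ : ℝ => myAlpha ω δ) 0 := by
    apply Real.continuous_sqrt.continuousAt.comp
    fun_prop
  have hα0 : myAlpha ω 0 = ω := by
    simp only [myAlpha]
    rw [show (0:ℝ) ^ 2 = 0 by ring, add_zero, show ω ^ 4 = (ω ^ 2) ^ 2 by ring,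
      Real.sqrt_sq (by positivity : (0:ℝ) ≤ ω ^ 2),
      show (ω ^ 2 + ω ^ 2) / 2 = ω ^ 2 by ring, Real.sqrt_sq hω.le]
  have hcont : ContinuousAt (fun δ : ℝ => mySqrt ω δ) 0 := by
    apply ContinuousAt.sub
    · exact Complex.continuous_ofReal.continuousAt.comp hαcont
    · apply ContinuousAt.mul continuousAt_const
      apply Complex.continuous_ofReal.continuousAt.comp
      have hden : ContinuousAt (fun δ : ℝ => 2 * myAlpha ω δ) 0 := continuousAt_const.mul hαcont
      have hdenne : 2 * myAlpha ω 0 ≠ 0 := by rw [hα0]; positivity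
      exact continuousAt_id.div hden hdenne
  have hval : mySqrt ω 0 = (ω : ℂ) := by
    simp [mySqrt, hα0]
  have := hcont.tendsto
  rw [hval] at this
  exact this.mono_left nhdsWithin_le_nhds

lemma my_pf (a b u s : ℂ) (v t : ℂ) (ha : a ≠ 0) (hb : b ≠ 0) (hu : u ≠ 0) (hv : v ≠ 0)
    (hs : s ≠ 0) (ht : t ≠ 0) (hva : v = u + 2 * a) (htb : t = s + 2 * b) :
    ((u * v) * (s * t))⁻¹
      = (4 * a * b)⁻¹ * ((u * s)⁻¹ - (u * t)⁻¹ - ((v * s)⁻¹ - (v * t)⁻¹)) := by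
  have e1 : (u * v) * (s * t) * (u * s)⁻¹ = v * t := by
    rw [show (u * v) * (s * t) = (v * t) * (u * s) by ring, mul_assoc,
      mul_inv_cancel₀ (mul_ne_zero hu hs), mul_one]
  have e2 : (u * v) * (s * t) * (u * t)⁻¹ = v * s := by
    rw [show (u * v) * (s * t) = (v * s) * (u * t) by ring, mul_assoc,
      mul_inv_cancel₀ (mul_ne_zero hu ht), mul_one]
  have e3 : (u * v) * (s * t) * (v * s)⁻¹ = u * t := by
    rw [show (u * v) * (s * t) = (u * t) * (v * s) by ring, mul_assoc,
      mul_inv_cancel₀ (mul_ne_zero hv hs), mul_one]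
  have e4 : (u * v) * (s * t) * (v * t)⁻¹ = u * s := by
    rw [show (u * v) * (s * t) = (u * s) * (v * t) by ring, mul_assoc,
      mul_inv_cancel₀ (mul_ne_zero hv ht), mul_one]
  have h4ab : (4 : ℂ) * a * b ≠ 0 := by
    apply mul_ne_zero (mul_ne_zero _ ha) hb
    norm_num
  apply inv_eq_of_mul_eq_one_right
  calc (u * v) * (s * t) * ((4 * a * b)⁻¹ * ((u * s)⁻¹ - (u * t)⁻¹ - ((v * s)⁻¹ - (v * t)⁻¹)))
      = (4 * a * b)⁻¹ * ((u * v) * (s * t) * (u * s)⁻¹ - (u * v) * (s * t) * (u * t)⁻¹ -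
          ((u * v) * (s * t) * (v * s)⁻¹ - (u * v) * (s * t) * (v * t)⁻¹)) := by ring
    _ = (4 * a * b)⁻¹ * (v * t - v * s - (u * t - u * s)) := by rw [e1, e2, e3, e4]
    _ = (4 * a * b)⁻¹ * (4 * a * b) := by rw [hva, htb]; ring_nf
    _ = 1 := inv_mul_cancel₀ h4ab

/-- one-loop loop-tree duality for the massive bubble at the level of the
energy integration.  For `ω₁, ω₂ > 0` and real `q₀` with `(ω₁+q₀)² ≠ ω₂²` and
`(ω₂−q₀)² ≠ ω₁²`, as `δ → 0⁺` the energy integral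
`∫_ℝ dE / [(E² − ω₁² + iδ)((E+q₀)² − ω₂² + iδ)]` tends to the common limit `L` of the
dual-cut expression
`−πi [ 1/(ω₁((ω₁+q₀)² − ω₂² + iδ')) + 1/(ω₂((ω₂−q₀)² − ω₁² + iδ')) ]` as `δ' → 0⁺`
(both infinitesimal imaginary parts positive: the dual prescription). -/
theorem bubble_loop_tree_duality (ω₁ ω₂ q₀ : ℝ) (hω₁ : 0 < ω₁) (hω₂ : 0 < ω₂)
    (h₁ : (ω₁ + q₀) ^ 2 ≠ ω₂ ^ 2) (h₂ : (ω₂ - q₀) ^ 2 ≠ ω₁ ^ 2) :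
    ∃ L : ℂ,
      Tendsto (fun δ : ℝ => ∫ x : ℝ,
          ((((x : ℂ) ^ 2 - (ω₁ : ℂ) ^ 2 + Complex.I * δ) *
            (((x : ℂ) + q₀) ^ 2 - (ω₂ : ℂ) ^ 2 + Complex.I * δ)))⁻¹)
        (nhdsWithin 0 (Set.Ioi 0)) (nhds L) ∧
      Tendsto (fun δ' : ℝ => -((π : ℂ) * Complex.I) *
          (((ω₁ : ℂ) * (((ω₁ : ℂ) + q₀) ^ 2 - (ω₂ : ℂ) ^ 2 + Complex.I * δ'))⁻¹ +
           ((ω₂ : ℂ) * (((ω₂ : ℂ) - q₀) ^ 2 - (ω₁ : ℂ) ^ 2 + Complex.I * δ'))⁻¹))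
        (nhdsWithin 0 (Set.Ioi 0)) (nhds L) := by
  -- real nonvanishing facts
  have hs1 : ω₁ + ω₂ + q₀ ≠ 0 := by intro h; apply h₁; nlinarith
  have hs2 : ω₁ + ω₂ - q₀ ≠ 0 := by intro h; apply h₂; nlinarith
  have hd1 : (ω₁ + q₀) ^ 2 - ω₂ ^ 2 ≠ 0 := sub_ne_zero.mpr h₁
  have hd2 : (ω₂ - q₀) ^ 2 - ω₁ ^ 2 ≠ 0 := sub_ne_zero.mpr h₂
  -- complex versions
  have hω₁c : (ω₁ : ℂ) ≠ 0 := Complex.ofReal_ne_zero.mpr hω₁.ne'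
  have hω₂c : (ω₂ : ℂ) ≠ 0 := Complex.ofReal_ne_zero.mpr hω₂.ne'
  have hc1 : -(ω₁ : ℂ) - ω₂ - q₀ ≠ 0 := by
    rw [show -(ω₁ : ℂ) - ω₂ - q₀ = ((-(ω₁ + ω₂ + q₀) : ℝ) : ℂ) by push_cast; ring]
    rw [Complex.ofReal_ne_zero]
    intro h; apply hs1; linarith
  have hc2 : -(ω₁ : ℂ) - ω₂ + q₀ ≠ 0 := by
    rw [show -(ω₁ : ℂ) - ω₂ + q₀ = ((-(ω₁ + ω₂ - q₀) : ℝ) : ℂ) by push_cast; ring]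
    rw [Complex.ofReal_ne_zero]
    intro h; apply hs2; linarith
  have hd1c : ((ω₁ : ℂ) + q₀) ^ 2 - (ω₂ : ℂ) ^ 2 ≠ 0 := by
    rw [show ((ω₁ : ℂ) + q₀) ^ 2 - (ω₂ : ℂ) ^ 2 = (((ω₁ + q₀) ^ 2 - ω₂ ^ 2 : ℝ) : ℂ) by
      push_cast; ring]
    exact Complex.ofReal_ne_zero.mpr hd1
  have hd2c : ((ω₂ : ℂ) - q₀) ^ 2 - (ω₁ : ℂ) ^ 2 ≠ 0 := by
    rw [show ((ω₂ : ℂ) - q₀) ^ 2 - (ω₁ : ℂ) ^ 2 = (((ω₂ - q₀) ^ 2 - ω₁ ^ 2 : ℝ) : ℂ) by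
      push_cast; ring]
    exact Complex.ofReal_ne_zero.mpr hd2
  refine ⟨(4 * (ω₁ : ℂ) * ω₂)⁻¹ *
      (-(2 * (π : ℂ) * Complex.I) * (-(ω₁ : ℂ) - ω₂ - q₀)⁻¹ -
        2 * (π : ℂ) * Complex.I * (-(ω₁ : ℂ) - ω₂ + q₀)⁻¹), ?_, ?_⟩
  · -- the energy integral
    have hval : ∀ δ : ℝ, δ ∈ Set.Ioi (0 : ℝ) →
        (∫ x : ℝ, ((((x : ℂ) ^ 2 - (ω₁ : ℂ) ^ 2 + Complex.I * δ) *
            (((x : ℂ) + q₀) ^ 2 - (ω₂ : ℂ) ^ 2 + Complex.I * δ)))⁻¹)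
        = (4 * mySqrt ω₁ δ * mySqrt ω₂ δ)⁻¹ *
            (-(2 * (π : ℂ) * Complex.I) * (-(mySqrt ω₁ δ) - mySqrt ω₂ δ - q₀)⁻¹ -
              2 * (π : ℂ) * Complex.I * (-(mySqrt ω₁ δ) - mySqrt ω₂ δ + q₀)⁻¹) := by
      intro δ hδ
      rw [Set.mem_Ioi] at hδ
      have ha2 : (mySqrt ω₁ δ) ^ 2 = (ω₁ : ℂ) ^ 2 - Complex.I * δ := mySqrt_sq _ _ hω₁ hδ
      have hb2 : (mySqrt ω₂ δ) ^ 2 = (ω₂ : ℂ) ^ 2 - Complex.I * δ := mySqrt_sq _ _ hω₂ hδ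
      have haim : (mySqrt ω₁ δ).im < 0 := mySqrt_im_neg _ _ hω₁ hδ
      have hbim : (mySqrt ω₂ δ).im < 0 := mySqrt_im_neg _ _ hω₂ hδ
      set a := mySqrt ω₁ δ
      set b := mySqrt ω₂ δ
      have hane : a ≠ 0 := by intro h; rw [h] at haim; simp at haim
      have hbne : b ≠ 0 := by intro h; rw [h] at hbim; simp at hbim
      -- imaginary parts of the four poles
      have him1 : (a : ℂ).im < 0 := haim
      have him2 : 0 < (-a : ℂ).im := by simpa using haim
      have him3 : ((b - (q₀ : ℂ)) : ℂ).im < 0 := by simpa using hbim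
      have him4 : 0 < ((-b - (q₀ : ℂ)) : ℂ).im := by simpa using hbim
      -- pointwise partial fraction decomposition
      have hpt : ∀ x : ℝ,
          ((((x : ℂ) ^ 2 - (ω₁ : ℂ) ^ 2 + Complex.I * δ) *
            (((x : ℂ) + q₀) ^ 2 - (ω₂ : ℂ) ^ 2 + Complex.I * δ)))⁻¹
          = (4 * a * b)⁻¹ •
            (((((x : ℂ) - a) * ((x : ℂ) - (b - (q₀ : ℂ))))⁻¹ -
              (((x : ℂ) - a) * ((x : ℂ) - (-b - (q₀ : ℂ))))⁻¹) -
             ((((x : ℂ) - (-a)) * ((x : ℂ) - (b - (q₀ : ℂ))))⁻¹ -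
              (((x : ℂ) - (-a)) * ((x : ℂ) - (-b - (q₀ : ℂ))))⁻¹)) := by
        intro x
        have h1 : (x : ℂ) - a ≠ 0 := my_sub_ne _ him1.ne x
        have h2 : (x : ℂ) - (-a) ≠ 0 := my_sub_ne _ him2.ne' x
        have h3 : (x : ℂ) - (b - (q₀ : ℂ)) ≠ 0 := my_sub_ne _ him3.ne x
        have h4 : (x : ℂ) - (-b - (q₀ : ℂ)) ≠ 0 := my_sub_ne _ him4.ne' x
        have hP : (x : ℂ) ^ 2 - (ω₁ : ℂ) ^ 2 + Complex.I * δ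
            = ((x : ℂ) - a) * ((x : ℂ) - (-a)) := by linear_combination ha2
        have hQ : ((x : ℂ) + q₀) ^ 2 - (ω₂ : ℂ) ^ 2 + Complex.I * δ
            = ((x : ℂ) - (b - (q₀ : ℂ))) * ((x : ℂ) - (-b - (q₀ : ℂ))) := by
          linear_combination hb2
        rw [hP, hQ, smul_eq_mul]
        exact my_pf a b ((x : ℂ) - a) ((x : ℂ) - (b - (q₀ : ℂ))) ((x : ℂ) - (-a))
          ((x : ℂ) - (-b - (q₀ : ℂ))) hane hbne h1 h2 h3 h4 (by ring) (by ring)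
      -- integrability of the four pieces
      have i13 := my_integrable a (b - (q₀ : ℂ)) him1.ne him3.ne
      have i14 := my_integrable a (-b - (q₀ : ℂ)) him1.ne him4.ne'
      have i23 := my_integrable (-a) (b - (q₀ : ℂ)) him2.ne' him3.ne
      have i24 := my_integrable (-a) (-b - (q₀ : ℂ)) him2.ne' him4.ne'
      calc (∫ x : ℝ, ((((x : ℂ) ^ 2 - (ω₁ : ℂ) ^ 2 + Complex.I * δ) *
            (((x : ℂ) + q₀) ^ 2 - (ω₂ : ℂ) ^ 2 + Complex.I * δ)))⁻¹)
          = ∫ x : ℝ, (4 * a * b)⁻¹ •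
            (((((x : ℂ) - a) * ((x : ℂ) - (b - (q₀ : ℂ))))⁻¹ -
              (((x : ℂ) - a) * ((x : ℂ) - (-b - (q₀ : ℂ))))⁻¹) -
             ((((x : ℂ) - (-a)) * ((x : ℂ) - (b - (q₀ : ℂ))))⁻¹ -
              (((x : ℂ) - (-a)) * ((x : ℂ) - (-b - (q₀ : ℂ))))⁻¹)) := by
            exact MeasureTheory.integral_congr_ae (Filter.Eventually.of_forall hpt)
        _ = (4 * a * b)⁻¹ •
            ((∫ x : ℝ, ((((x : ℂ) - a) * ((x : ℂ) - (b - (q₀ : ℂ))))⁻¹ -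
              (((x : ℂ) - a) * ((x : ℂ) - (-b - (q₀ : ℂ))))⁻¹)) -
             (∫ x : ℝ, ((((x : ℂ) - (-a)) * ((x : ℂ) - (b - (q₀ : ℂ))))⁻¹ -
              (((x : ℂ) - (-a)) * ((x : ℂ) - (-b - (q₀ : ℂ))))⁻¹))) := by
            rw [MeasureTheory.integral_smul]
            congr 1
            exact MeasureTheory.integral_sub (i13.sub i14) (i23.sub i24)
        _ = (4 * a * b)⁻¹ •
            (((∫ x : ℝ, (((x : ℂ) - a) * ((x : ℂ) - (b - (q₀ : ℂ))))⁻¹) -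
              (∫ x : ℝ, (((x : ℂ) - a) * ((x : ℂ) - (-b - (q₀ : ℂ))))⁻¹)) -
             ((∫ x : ℝ, (((x : ℂ) - (-a)) * ((x : ℂ) - (b - (q₀ : ℂ))))⁻¹) -
              (∫ x : ℝ, (((x : ℂ) - (-a)) * ((x : ℂ) - (-b - (q₀ : ℂ))))⁻¹))) := by
            congr 1
            rw [MeasureTheory.integral_sub i13 i14, MeasureTheory.integral_sub i23 i24]
        _ = (4 * a * b)⁻¹ *
            (-(2 * (π : ℂ) * Complex.I) * (-a - b - q₀)⁻¹ -
              2 * (π : ℂ) * Complex.I * (-a - b + q₀)⁻¹) := by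
            have v13 : (∫ x : ℝ, (((x : ℂ) - a) * ((x : ℂ) - (b - (q₀ : ℂ))))⁻¹) = 0 :=
              my_integral_same a (b - (q₀ : ℂ)) him1.ne him3.ne
                (by rw [Real.sign_of_neg him1, Real.sign_of_neg him3])
            have v24 : (∫ x : ℝ, (((x : ℂ) - (-a)) * ((x : ℂ) - (-b - (q₀ : ℂ))))⁻¹) = 0 :=
              my_integral_same (-a) (-b - (q₀ : ℂ)) him2.ne' him4.ne'
                (by rw [Real.sign_of_pos him2, Real.sign_of_pos him4])
            have v14 : (∫ x : ℝ, (((x : ℂ) - a) * ((x : ℂ) - (-b - (q₀ : ℂ))))⁻¹)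
                = 2 * (π : ℂ) * Complex.I * (-b - (q₀ : ℂ) - a)⁻¹ :=
              my_integral_opp a (-b - (q₀ : ℂ)) him1 him4
            have v23 : (∫ x : ℝ, (((x : ℂ) - (-a)) * ((x : ℂ) - (b - (q₀ : ℂ))))⁻¹)
                = 2 * (π : ℂ) * Complex.I * (-a - (b - (q₀ : ℂ)))⁻¹ := by
              have hcomm : (∫ x : ℝ, (((x : ℂ) - (-a)) * ((x : ℂ) - (b - (q₀ : ℂ))))⁻¹)
                  = ∫ x : ℝ, (((x : ℂ) - (b - (q₀ : ℂ))) * ((x : ℂ) - (-a)))⁻¹ := by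
                apply MeasureTheory.integral_congr_ae
                filter_upwards with x
                rw [mul_comm]
              rw [hcomm]
              exact my_integral_opp (b - (q₀ : ℂ)) (-a) him3 him2
            rw [v13, v24, v14, v23, smul_eq_mul]
            have e3 : -b - (q₀ : ℂ) - a ≠ 0 := by
              intro h
              have := congrArg Complex.im h
              simp only [Complex.sub_im, Complex.neg_im, Complex.ofReal_im, Complex.zero_im] at this
              nlinarith [haim, hbim]
            have e4 : -a - (b - (q₀ : ℂ)) ≠ 0 := by
              intro h
              have := congrArg Complex.im h
              simp only [Complex.sub_im, Complex.neg_im, Complex.ofReal_im, Complex.zero_im] at this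
              nlinarith [haim, hbim]
            have e5 : -a - b - (q₀ : ℂ) ≠ 0 := by
              intro h
              have := congrArg Complex.im h
              simp only [Complex.sub_im, Complex.neg_im, Complex.ofReal_im, Complex.zero_im] at this
              nlinarith [haim, hbim]
            have e6 : -a - b + (q₀ : ℂ) ≠ 0 := by
              intro h
              have := congrArg Complex.im h
              simp only [Complex.add_im, Complex.sub_im, Complex.neg_im, Complex.ofReal_im,
                Complex.zero_im] at this
              nlinarith [haim, hbim]
            have r1 : (-b - (q₀ : ℂ) - a)⁻¹ = (-a - b - (q₀ : ℂ))⁻¹ := by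
              congr 1
              ring
            have r2 : (-a - (b - (q₀ : ℂ)))⁻¹ = (-a - b + (q₀ : ℂ))⁻¹ := by
              congr 1
              ring
            rw [r1, r2]
            ring
    have htend1 : Tendsto (fun δ : ℝ => (4 * mySqrt ω₁ δ * mySqrt ω₂ δ)⁻¹ *
        (-(2 * (π : ℂ) * Complex.I) * (-(mySqrt ω₁ δ) - mySqrt ω₂ δ - q₀)⁻¹ -
          2 * (π : ℂ) * Complex.I * (-(mySqrt ω₁ δ) - mySqrt ω₂ δ + q₀)⁻¹))
        (nhdsWithin 0 (Set.Ioi 0))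
        (nhds ((4 * (ω₁ : ℂ) * ω₂)⁻¹ *
          (-(2 * (π : ℂ) * Complex.I) * (-(ω₁ : ℂ) - ω₂ - q₀)⁻¹ -
            2 * (π : ℂ) * Complex.I * (-(ω₁ : ℂ) - ω₂ + q₀)⁻¹))) := by
      have ha := mySqrt_tendsto ω₁ hω₁
      have hb := mySqrt_tendsto ω₂ hω₂
      apply Tendsto.mul
      · apply Tendsto.inv₀
        · exact (ha.const_mul 4).mul hb
        · simp only [ne_eq, mul_eq_zero, not_or]
          exact ⟨⟨by norm_num, hω₁c⟩, hω₂c⟩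
      · exact Tendsto.sub
          ((((ha.neg.sub hb).sub_const _).inv₀ hc1).const_mul _)
          ((((ha.neg.sub hb).add_const _).inv₀ hc2).const_mul _)
    apply htend1.congr'
    filter_upwards [self_mem_nhdsWithin] with δ hδ
    exact (hval δ hδ).symm
  · -- the dual-cut expression
    have hδc : Tendsto (fun δ' : ℝ => ((δ' : ℝ) : ℂ)) (nhdsWithin 0 (Set.Ioi 0)) (nhds 0) := by
      have := (Complex.continuous_ofReal.tendsto 0).mono_left
        (nhdsWithin_le_nhds (s := Set.Ioi (0:ℝ)))
      simpa using this
    have hden1 : Tendsto (fun δ' : ℝ => (ω₁ : ℂ) * (((ω₁ : ℂ) + q₀) ^ 2 - (ω₂ : ℂ) ^ 2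
        + Complex.I * δ')) (nhdsWithin 0 (Set.Ioi 0))
        (nhds ((ω₁ : ℂ) * (((ω₁ : ℂ) + q₀) ^ 2 - (ω₂ : ℂ) ^ 2))) := by
      have := (tendsto_const_nhds (x := ((ω₁ : ℂ) + q₀) ^ 2 - (ω₂ : ℂ) ^ 2)).add
        (hδc.const_mul Complex.I)
      have h2 := this.const_mul ((ω₁ : ℂ))
      simpa using h2
    have hden2 : Tendsto (fun δ' : ℝ => (ω₂ : ℂ) * (((ω₂ : ℂ) - q₀) ^ 2 - (ω₁ : ℂ) ^ 2
        + Complex.I * δ')) (nhdsWithin 0 (Set.Ioi 0))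
        (nhds ((ω₂ : ℂ) * (((ω₂ : ℂ) - q₀) ^ 2 - (ω₁ : ℂ) ^ 2))) := by
      have := (tendsto_const_nhds (x := ((ω₂ : ℂ) - q₀) ^ 2 - (ω₁ : ℂ) ^ 2)).add
        (hδc.const_mul Complex.I)
      have h2 := this.const_mul ((ω₂ : ℂ))
      simpa using h2
    have htend2 : Tendsto (fun δ' : ℝ => -((π : ℂ) * Complex.I) *
        (((ω₁ : ℂ) * (((ω₁ : ℂ) + q₀) ^ 2 - (ω₂ : ℂ) ^ 2 + Complex.I * δ'))⁻¹ +
         ((ω₂ : ℂ) * (((ω₂ : ℂ) - q₀) ^ 2 - (ω₁ : ℂ) ^ 2 + Complex.I * δ'))⁻¹))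
        (nhdsWithin 0 (Set.Ioi 0))
        (nhds (-((π : ℂ) * Complex.I) *
          (((ω₁ : ℂ) * (((ω₁ : ℂ) + q₀) ^ 2 - (ω₂ : ℂ) ^ 2))⁻¹ +
           ((ω₂ : ℂ) * (((ω₂ : ℂ) - q₀) ^ 2 - (ω₁ : ℂ) ^ 2))⁻¹))) := by
      exact ((hden1.inv₀ (mul_ne_zero hω₁c hd1c)).add
        (hden2.inv₀ (mul_ne_zero hω₂c hd2c))).const_mul _
    have hvaleq : -((π : ℂ) * Complex.I) *
          (((ω₁ : ℂ) * (((ω₁ : ℂ) + q₀) ^ 2 - (ω₂ : ℂ) ^ 2))⁻¹ +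
           ((ω₂ : ℂ) * (((ω₂ : ℂ) - q₀) ^ 2 - (ω₁ : ℂ) ^ 2))⁻¹)
        = (4 * (ω₁ : ℂ) * ω₂)⁻¹ *
          (-(2 * (π : ℂ) * Complex.I) * (-(ω₁ : ℂ) - ω₂ - q₀)⁻¹ -
            2 * (π : ℂ) * Complex.I * (-(ω₁ : ℂ) - ω₂ + q₀)⁻¹) := by
      field_simp
      ring
    rw [hvaleq] at htend2
    exact htend2
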